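/- In the partial order P of pairs s = (f_s, C_s), if Γ ⊆ U_p is not large relative to s, then there exists t ≤₀ s such that the complement U_p \ Γ is large relative to t. -/

import Mathlib

/-- An element of the partial order `P`: a pair `(f, C)` where `C` is an isometric
copy of the whole space `X` (playing the role of `U_p`), and `f` is a Katětov map
with finite nonempty domain contained in `C` and values in `{1,…,p}`. -/
structure UPair (X : Type*) [MetricSpace X] (p : ℕ) where
  C : Set X
  copy : ∃ e : X → X, Isometry e ∧ Set.range e = C
  dom : Finset X
  domNE : dom.Nonempty
  domSub : ↑dom ⊆ C
  f : X → ℕ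
  frange : ∀ x ∈ dom, 1 ≤ f x ∧ f x ≤ p
  fkat : ∀ x ∈ dom, ∀ y ∈ dom,
    |(f x : ℝ) - (f y : ℝ)| ≤ dist x y ∧ dist x y ≤ (f x : ℝ) + (f y : ℝ)

/-- `min f_s`. -/
def UPair.minf {X : Type*} [MetricSpace X] {p : ℕ} (s : UPair X p) : ℕ :=
  s.dom.inf' s.domNE s.f

/-- `t ≤ s` in `P`. -/
def UPair.le {X : Type*} [MetricSpace X] {p : ℕ} (t s : UPair X p) : Prop :=
  ↑s.dom ⊆ (↑t.dom : Set X) ∧ t.C ⊆ s.C ∧ ∀ x ∈ s.dom, t.f x = s.f x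

/-- `t ≤ₖ s`:  `t ≤ s` and `min f_t = min f_s - k` if `min f_s > k`, else `min f_t = 1`. -/
def UPair.leK {X : Type*} [MetricSpace X] {p : ℕ} (k : ℕ) (t s : UPair X p) : Prop :=
  t.le s ∧ t.minf = (if k < s.minf then s.minf - k else 1)

/-- The orbit `O(f_s, C_s)`: points of `C_s` realizing `f_s` over `dom f_s`. -/
def UPair.orbit {X : Type*} [MetricSpace X] {p : ℕ} (s : UPair X p) : Set X :=
  {y ∈ s.C | ∀ x ∈ s.dom, dist y x = (s.f x : ℝ)}

section Basic
variable {X : Type*} [MetricSpace X] {p : ℕ}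

lemma UPair.minf_pos (s : UPair X p) : 1 ≤ s.minf := by
  obtain ⟨x, hx, hval⟩ := Finset.exists_mem_eq_inf' s.domNE s.f
  rw [UPair.minf, hval]; exact (s.frange x hx).1

lemma UPair.minf_le {s : UPair X p} {x : X} (hx : x ∈ s.dom) : s.minf ≤ s.f x :=
  Finset.inf'_le _ hx

lemma UPair.minf_le_p (s : UPair X p) : s.minf ≤ p := by
  obtain ⟨x, hx, hval⟩ := Finset.exists_mem_eq_inf' s.domNE s.f
  rw [UPair.minf, hval]; exact (s.frange x hx).2

lemma UPair.le_trans {a b c : UPair X p} (h1 : a.le b) (h2 : b.le c) : a.le c :=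
  ⟨fun x hx => h1.1 (h2.1 hx), fun x hx => h2.2.1 (h1.2.1 hx),
   fun x hx => by rw [h1.2.2 x (h2.1 hx), h2.2.2 x hx]⟩

lemma UPair.orbit_mono {a b : UPair X p} (h : a.le b) : a.orbit ⊆ b.orbit := by
  rintro y ⟨hyC, hyr⟩
  exact ⟨h.2.1 hyC, fun x hx => by rw [hyr x (h.1 hx), h.2.2 x hx]⟩

lemma UPair.leK0_minf {t s : UPair X p} (h : t.leK 0 s) : t.minf = s.minf := by
  rw [h.2, if_pos (lt_of_lt_of_le Nat.zero_lt_one s.minf_pos)]; omega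

lemma UPair.leK0_of {t s : UPair X p} (ts : t.le s) (hm : t.minf = s.minf) : t.leK 0 s :=
  ⟨ts, by rw [hm, if_pos (lt_of_lt_of_le Nat.zero_lt_one s.minf_pos)]; omega⟩

end Basic

section Metric
variable {X : Type} [MetricSpace X]

/-- distance for a one-point extension of `X`. -/
noncomputable def optDist (H : X → ℝ) : Option X → Option X → ℝ
  | some a, some b => dist a b
  | some a, none => H a
  | none, some b => H b
  | none, none => 0

/-- the one-point extension metric space. -/
noncomputable def optMetric (H : X → ℝ)
    (hpos : ∀ x, 1 ≤ H x)
    (hlip : ∀ y y', H y ≤ H y' + dist y y')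
    (hsum : ∀ y y', dist y y' ≤ H y + H y') : MetricSpace (Option X) where
  dist := optDist H
  dist_self := by rintro (_|a) <;> simp [optDist]
  dist_comm := by rintro (_|a) (_|b) <;> simp [optDist, dist_comm]
  dist_triangle := by
    rintro (_|a) (_|b) (_|c) <;> simp only [optDist]
    · norm_num
    · have := hpos c; linarith
    · have := hpos b; linarith
    · have h1 := hlip c b; have h2 := dist_comm b c; linarith
    · norm_num
    · exact hsum a c
    · have := hlip a b; linarith
    · exact dist_triangle a b c
  eq_of_dist_eq_zero := by
    rintro (_|a) (_|b) h
    · rfl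
    · exfalso; have := hpos b; simp only [optDist] at h; linarith
    · exfalso; have := hpos a; simp only [optDist] at h; linarith
    · simp only [optDist] at h; rw [dist_eq_zero] at h; rw [h]

end Metric

section Ext
variable {p : ℕ} {X : Type} [MetricSpace X]

/-- extension of a finite Katětov map with values in `[1,p]` to a global one. -/
lemma katetov_ext (hp : 1 ≤ p)
    (hdist : ∀ x y : X, x ≠ y → ∃ k : ℕ, 1 ≤ k ∧ k ≤ p ∧ dist x y = k)
    (D : Finset X) (hD : D.Nonempty) (h : X → ℕ)
    (hrange : ∀ x ∈ D, 1 ≤ h x ∧ h x ≤ p)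
    (hkat : ∀ x ∈ D, ∀ y ∈ D,
      |(h x : ℝ) - (h y : ℝ)| ≤ dist x y ∧ dist x y ≤ (h x : ℝ) + (h y : ℝ)) :
    ∃ H : X → ℕ, (∀ x ∈ D, H x = h x) ∧ (∀ y, 1 ≤ H y ∧ H y ≤ p) ∧
      (∀ y y', (H y : ℝ) ≤ (H y' : ℝ) + dist y y') ∧
      (∀ y y', dist y y' ≤ (H y : ℝ) + (H y' : ℝ)) := by
  classical
  have key : ∀ x y : X, ∃ k : ℕ, (k : ℝ) = dist x y ∧ k ≤ p := by
    intro x y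
    by_cases hxy : x = y
    · exact ⟨0, by simp [hxy], by omega⟩
    · obtain ⟨k, _, h2, h3⟩ := hdist x y hxy; exact ⟨k, h3.symm, h2⟩
  choose nd ndcast ndlep using key
  have ndzero : ∀ x : X, nd x x = 0 := by
    intro x
    have := ndcast x x
    rw [dist_self] at this
    exact_mod_cast this
  set T : X → ℕ := fun y => D.inf' hD fun x => h x + nd y x with hT
  refine ⟨fun y => min p (T y), ?_, ?_, ?_, ?_⟩
  · -- agrees with h on D
    intro x hx
    show min p (T x) = h x
    have h1 : T x ≤ h x := by
      calc T x ≤ h x + nd x x := Finset.inf'_le _ hx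
        _ = h x := by rw [ndzero]; omega
    have h2 : h x ≤ T x := by
      apply Finset.le_inf'
      intro x' hx'
      have hk := (hkat x hx x' hx').1
      have : (h x : ℝ) ≤ (h x' : ℝ) + dist x x' := by
        have := abs_le.mp hk; linarith [this.2]
      rw [← ndcast x x'] at this
      exact_mod_cast this
    have := (hrange x hx).2
    omega
  · -- range
    intro y
    show 1 ≤ min p (T y) ∧ min p (T y) ≤ p
    constructor
    · refine le_min hp (Finset.le_inf' _ _ ?_)
      intro x hx
      have := (hrange x hx).1; omega
    · exact min_le_left _ _
  · -- Lipschitz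
    intro y y'
    show ((min p (T y) : ℕ) : ℝ) ≤ ((min p (T y') : ℕ) : ℝ) + dist y y'
    rcases min_cases p (T y') with ⟨he, _⟩ | ⟨he, _⟩
    · rw [he]
      have h1 : min p (T y) ≤ p := min_le_left _ _
      have h1' : ((min p (T y) : ℕ) : ℝ) ≤ (p : ℝ) := by exact_mod_cast h1
      linarith [dist_nonneg (x := y) (y := y')]
    · rw [he]
      obtain ⟨x, hx, hvx⟩ := Finset.exists_mem_eq_inf' hD (fun x => h x + nd y' x)
      have h1 : min p (T y) ≤ h x + nd y x :=
        le_trans (min_le_right _ _) (Finset.inf'_le _ hx)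
      have h1' : ((min p (T y) : ℕ) : ℝ) ≤ (h x : ℝ) + (nd y x : ℝ) := by exact_mod_cast h1
      have h2 : (nd y x : ℝ) ≤ (nd y' x : ℝ) + dist y y' := by
        rw [ndcast, ndcast]
        calc dist y x ≤ dist y y' + dist y' x := dist_triangle _ _ _
          _ = dist y' x + dist y y' := by ring
      have h3 : ((T y' : ℕ) : ℝ) = (h x : ℝ) + (nd y' x : ℝ) := by
        rw [hT]; simp only []; rw [hvx]; push_cast; ring
      linarith
  · -- sum bound
    intro y y'
    show dist y y' ≤ ((min p (T y) : ℕ) : ℝ) + ((min p (T y') : ℕ) : ℝ)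
    have hdp : dist y y' ≤ (p : ℝ) := by
      rw [← ndcast y y']; exact_mod_cast ndlep y y'
    have hnn : ∀ z : X, (0:ℝ) ≤ ((min p (T z) : ℕ) : ℝ) := fun z => Nat.cast_nonneg _
    rcases min_cases p (T y) with ⟨he, _⟩ | ⟨he, _⟩
    · rw [he]; linarith [hnn y']
    · rcases min_cases p (T y') with ⟨he', _⟩ | ⟨he', _⟩
      · rw [he']; linarith [hnn y]
      · rw [he, he']
        obtain ⟨x, hx, hvx⟩ := Finset.exists_mem_eq_inf' hD (fun x => h x + nd y x)
        obtain ⟨x', hx', hvx'⟩ := Finset.exists_mem_eq_inf' hD (fun x => h x + nd y' x)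
        have e1 : ((T y : ℕ) : ℝ) = (h x : ℝ) + (nd y x : ℝ) := by
          rw [hT]; simp only []; rw [hvx]; push_cast; ring
        have e2 : ((T y' : ℕ) : ℝ) = (h x' : ℝ) + (nd y' x' : ℝ) := by
          rw [hT]; simp only []; rw [hvx']; push_cast; ring
        have hxx := (hkat x hx x' hx').2
        have htri : dist y y' ≤ dist y x + dist x x' + dist x' y' := by
          calc dist y y' ≤ dist y x + dist x y' := dist_triangle _ _ _
            _ ≤ dist y x + dist x x' + dist x' y' := by linarith [dist_triangle x x' y']
        have c1 : (nd y x : ℝ) = dist y x := ndcast _ _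
        have c2 : (nd y' x' : ℝ) = dist y' x' := ndcast _ _
        have c3 : dist x' y' = dist y' x' := dist_comm _ _
        linarith

end Ext

section Realize
variable {p : ℕ} {X : Type} [MetricSpace X] [Countable X]

lemma exists_realizing (hp : 1 ≤ p)
    (hdist : ∀ x y : X, x ≠ y → ∃ k : ℕ, 1 ≤ k ∧ k ≤ p ∧ dist x y = k)
    (hultra : ∀ (F : Finset X) (φ : X → X),
      (∀ x ∈ F, ∀ y ∈ F, dist (φ x) (φ y) = dist x y) →
      ∃ ψ : X ≃ᵢ X, ∀ x ∈ F, ψ x = φ x)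
    (huniv : ∀ (Y : Type) [MetricSpace Y] [Countable Y],
      (∀ x y : Y, x ≠ y → ∃ k : ℕ, 1 ≤ k ∧ k ≤ p ∧ dist x y = k) →
      ∃ e : Y → X, Isometry e)
    (D : Finset X) (hD : D.Nonempty) (h : X → ℕ)
    (hrange : ∀ x ∈ D, 1 ≤ h x ∧ h x ≤ p)
    (hkat : ∀ x ∈ D, ∀ y ∈ D,
      |(h x : ℝ) - (h y : ℝ)| ≤ dist x y ∧ dist x y ≤ (h x : ℝ) + (h y : ℝ)) :
    ∃ w : X, ∀ x ∈ D, dist w x = (h x : ℝ) := by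
  classical
  obtain ⟨H, hHD, hHr, hHlip, hHsum⟩ := katetov_ext hp hdist D hD h hrange hkat
  -- one-point extension metric
  letI M : MetricSpace (Option X) :=
    optMetric (fun x => (H x : ℝ))
      (fun x => show (1:ℝ) ≤ (H x : ℝ) by exact_mod_cast (hHr x).1)
      (fun y y' => hHlip y y') (fun y y' => hHsum y y')
  have hdd : ∀ a b : X, dist (some a : Option X) (some b) = dist a b := fun a b => rfl
  have hdn : ∀ a : X, dist (none : Option X) (some a) = (H a : ℝ) := fun a => rfl
  have hdistY : ∀ a b : Option X, a ≠ b → ∃ k : ℕ, 1 ≤ k ∧ k ≤ p ∧ dist a b = k := by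
    rintro (_|a) (_|b) hab
    · exact absurd rfl hab
    · exact ⟨H b, (hHr b).1, (hHr b).2, rfl⟩
    · refine ⟨H a, (hHr a).1, (hHr a).2, ?_⟩
      show optDist (fun x => (H x : ℝ)) (some a) none = (H a : ℝ); rfl
    · obtain ⟨k, h1, h2, h3⟩ := hdist a b (fun hab' => hab (by rw [hab']))
      exact ⟨k, h1, h2, h3⟩
  obtain ⟨e, he⟩ := huniv (Option X) hdistY
  haveI : Nonempty X := ⟨hD.choose⟩
  set g : X → X := fun x => e (some x) with hg
  have hginj : Function.Injective g := fun a b hab => by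
    have := he.injective hab; injection this
  set φ : X → X := Function.invFun g with hφ
  have hφg : ∀ x : X, φ (g x) = x := Function.leftInverse_invFun hginj
  have hFpres : ∀ z1 ∈ D.image g, ∀ z2 ∈ D.image g, dist (φ z1) (φ z2) = dist z1 z2 := by
    intro z1 hz1 z2 hz2
    obtain ⟨x1, _, rfl⟩ := Finset.mem_image.mp hz1
    obtain ⟨x2, _, rfl⟩ := Finset.mem_image.mp hz2
    rw [hφg, hφg]
    have := he.dist_eq (some x1) (some x2)
    rw [hdd] at this
    rw [hg]; rw [this]
  obtain ⟨ψ, hψ⟩ := hultra (D.image g) φ hFpres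
  refine ⟨ψ (e none), ?_⟩
  intro x hx
  have h1 : ψ (g x) = x := by
    rw [hψ (g x) (Finset.mem_image_of_mem g hx), hφg]
  calc dist (ψ (e none)) x = dist (ψ (e none)) (ψ (g x)) := by rw [h1]
    _ = dist (e none) (g x) := ψ.dist_eq _ _
    _ = dist (none : Option X) (some x) := (he.dist_eq none (some x))
    _ = (H x : ℝ) := hdn x
    _ = (h x : ℝ) := by rw [hHD x hx]

lemma exists_realizing_avoid (hp : 1 ≤ p)
    (hdist : ∀ x y : X, x ≠ y → ∃ k : ℕ, 1 ≤ k ∧ k ≤ p ∧ dist x y = k)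
    (hultra : ∀ (F : Finset X) (φ : X → X),
      (∀ x ∈ F, ∀ y ∈ F, dist (φ x) (φ y) = dist x y) →
      ∃ ψ : X ≃ᵢ X, ∀ x ∈ F, ψ x = φ x)
    (huniv : ∀ (Y : Type) [MetricSpace Y] [Countable Y],
      (∀ x y : Y, x ≠ y → ∃ k : ℕ, 1 ≤ k ∧ k ≤ p ∧ dist x y = k) →
      ∃ e : Y → X, Isometry e)
    (D : Finset X) (hD : D.Nonempty) (h : X → ℕ)
    (hrange : ∀ x ∈ D, 1 ≤ h x ∧ h x ≤ p)
    (hkat : ∀ x ∈ D, ∀ y ∈ D,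
      |(h x : ℝ) - (h y : ℝ)| ≤ dist x y ∧ dist x y ≤ (h x : ℝ) + (h y : ℝ))
    (S : Finset X) :
    ∃ w : X, w ∉ S ∧ ∀ x ∈ D, dist w x = (h x : ℝ) := by
  classical
  obtain ⟨H, hHD, hHr, hHlip, hHsum⟩ := katetov_ext hp hdist D hD h hrange hkat
  have hkat' : ∀ x ∈ D ∪ S, ∀ y ∈ D ∪ S,
      |(H x : ℝ) - (H y : ℝ)| ≤ dist x y ∧ dist x y ≤ (H x : ℝ) + (H y : ℝ) := by
    intro x _ y _
    refine ⟨abs_sub_le_iff.mpr ⟨?_, ?_⟩, hHsum x y⟩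
    · have := hHlip x y; linarith
    · have := hHlip y x; rw [dist_comm] at this; linarith
  obtain ⟨w, hw⟩ := exists_realizing hp hdist hultra huniv (D ∪ S)
    (Finset.Nonempty.inl hD) H (fun x _ => hHr x) hkat'
  refine ⟨w, ?_, ?_⟩
  · intro hwS
    have h1 := hw w (Finset.mem_union_right D hwS)
    rw [dist_self] at h1
    have h2 : (1:ℝ) ≤ (H w : ℝ) := by exact_mod_cast (hHr w).1
    linarith
  · intro x hx
    rw [hw x (Finset.mem_union_left S hx), hHD x hx]

end Realize

section Orbit
variable {p : ℕ} {X : Type} [MetricSpace X] [Countable X]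

lemma orbit_infinite (hp : 1 ≤ p)
    (hdist : ∀ x y : X, x ≠ y → ∃ k : ℕ, 1 ≤ k ∧ k ≤ p ∧ dist x y = k)
    (hultra : ∀ (F : Finset X) (φ : X → X),
      (∀ x ∈ F, ∀ y ∈ F, dist (φ x) (φ y) = dist x y) →
      ∃ ψ : X ≃ᵢ X, ∀ x ∈ F, ψ x = φ x)
    (huniv : ∀ (Y : Type) [MetricSpace Y] [Countable Y],
      (∀ x y : Y, x ≠ y → ∃ k : ℕ, 1 ≤ k ∧ k ≤ p ∧ dist x y = k) →
      ∃ e : Y → X, Isometry e)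
    (u : UPair X p) : u.orbit.Infinite := by
  classical
  by_contra hinf
  rw [Set.not_infinite] at hinf
  obtain ⟨e, he, hre⟩ := u.copy
  haveI : Nonempty X := ⟨u.domNE.choose⟩
  set g : X → X := Function.invFun e with hg
  have hinj : Function.Injective e := he.injective
  have hge : ∀ x ∈ u.C, e (g x) = x := by
    intro x hx
    apply Function.invFun_eq
    rw [← hre] at hx; exact hx
  have hgel : ∀ y : X, g (e y) = y := Function.leftInverse_invFun hinj
  set D' : Finset X := u.dom.image g with hD'
  have hD'ne : D'.Nonempty := u.domNE.image g
  set h' : X → ℕ := fun y => u.f (e y) with hh'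
  have hmem : ∀ x ∈ u.dom, e (g x) = x := fun x hx => hge x (u.domSub hx)
  have hval : ∀ x ∈ u.dom, h' (g x) = u.f x := by
    intro x hx
    show u.f (e (g x)) = u.f x
    rw [hmem x hx]
  have hrange' : ∀ y ∈ D', 1 ≤ h' y ∧ h' y ≤ p := by
    intro y hy
    obtain ⟨x, hx, rfl⟩ := Finset.mem_image.mp hy
    rw [hval x hx]
    exact u.frange x hx
  have hkat' : ∀ y ∈ D', ∀ y' ∈ D',
      |(h' y : ℝ) - (h' y' : ℝ)| ≤ dist y y' ∧ dist y y' ≤ (h' y : ℝ) + (h' y' : ℝ) := by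
    intro y hy y' hy'
    obtain ⟨x, hx, rfl⟩ := Finset.mem_image.mp hy
    obtain ⟨x', hx', rfl⟩ := Finset.mem_image.mp hy'
    have hd : dist (g x) (g x') = dist x x' := by
      have h0 := he.dist_eq (g x) (g x')
      rw [hmem x hx, hmem x' hx'] at h0
      exact h0.symm
    rw [hval x hx, hval x' hx', hd]
    exact u.fkat x hx x' hx'
  obtain ⟨w', hw'S, hw'⟩ := exists_realizing_avoid hp hdist hultra huniv D' hD'ne h'
    hrange' hkat' (hinf.toFinset.image g)
  have hwC : e w' ∈ u.C := by rw [← hre]; exact ⟨w', rfl⟩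
  have hworb : e w' ∈ u.orbit := by
    refine ⟨hwC, ?_⟩
    intro x hx
    have h1 := hw' (g x) (Finset.mem_image_of_mem g hx)
    have h2 := he.dist_eq w' (g x)
    rw [hmem x hx] at h2
    rw [h2, h1, hval x hx]
  apply hw'S
  have hgw : g (e w') = w' := hgel w'
  rw [← hgw]
  exact Finset.mem_image_of_mem g (hinf.mem_toFinset.mpr hworb)

end Orbit

/-- Auxiliary recursive definition of largeness, stratified by `min f_s - 1`. -/
def LargeN {X : Type*} [MetricSpace X] {p : ℕ} (Γ : Set X) :
    ℕ → UPair X p → Prop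
  | 0, s => ∀ t, UPair.leK 0 t s → (t.orbit ∩ Γ).Infinite
  | n + 1, s => ∀ t, UPair.leK 0 t s → ∃ u, UPair.leK 1 u t ∧ LargeN Γ n u

/-- `Γ` is large relative to `s`. -/
def Large {X : Type*} [MetricSpace X] {p : ℕ} (Γ : Set X) (s : UPair X p) : Prop :=
  LargeN Γ (s.minf - 1) s

section Main
variable {p : ℕ} {X : Type} [MetricSpace X] [Countable X]

lemma exists_leK1 (hp : 1 ≤ p)
    (hdist : ∀ x y : X, x ≠ y → ∃ k : ℕ, 1 ≤ k ∧ k ≤ p ∧ dist x y = k)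
    (hultra : ∀ (F : Finset X) (φ : X → X),
      (∀ x ∈ F, ∀ y ∈ F, dist (φ x) (φ y) = dist x y) →
      ∃ ψ : X ≃ᵢ X, ∀ x ∈ F, ψ x = φ x)
    (huniv : ∀ (Y : Type) [MetricSpace Y] [Countable Y],
      (∀ x y : Y, x ≠ y → ∃ k : ℕ, 1 ≤ k ∧ k ≤ p ∧ dist x y = k) →
      ∃ e : Y → X, Isometry e)
    (v : UPair X p) : ∃ u : UPair X p, u.leK 1 v := by
  classical
  obtain ⟨z, hzC, hzr⟩ := (orbit_infinite hp hdist hultra huniv v).nonempty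
  set m : ℕ := if 1 < v.minf then v.minf - 1 else 1 with hm
  have hvpos := v.minf_pos
  have hm1 : 1 ≤ m := by rw [hm]; split_ifs <;> omega
  have hmle : m ≤ v.minf := by rw [hm]; split_ifs <;> omega
  have hzdom : z ∉ v.dom := by
    intro hz'
    have h1 := hzr z hz'
    rw [dist_self] at h1
    have h2 : v.f z = 0 := by exact_mod_cast h1.symm
    have := (v.frange z hz').1
    omega
  set fu : X → ℕ := fun x => if x = z then m else v.f x with hfu
  have hfuz : fu z = m := if_pos rfl
  have hfud : ∀ x ∈ v.dom, fu x = v.f x := by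
    intro x hx
    rw [hfu]
    have hxz : x ≠ z := fun hxz => hzdom (hxz ▸ hx)
    simp [hxz]
  have habs : ∀ x ∈ v.dom,
      |(m : ℝ) - (v.f x : ℝ)| ≤ (v.f x : ℝ) ∧ (v.f x : ℝ) ≤ (m : ℝ) + (v.f x : ℝ) := by
    intro x hx
    have h1 : (m : ℝ) ≤ (v.f x : ℝ) := by
      exact_mod_cast le_trans hmle (UPair.minf_le hx)
    have h2 : (0 : ℝ) ≤ (m : ℝ) := Nat.cast_nonneg _
    have h3 : (0 : ℝ) ≤ (v.f x : ℝ) := Nat.cast_nonneg _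
    refine ⟨abs_le.mpr ⟨by linarith, by linarith⟩, by linarith⟩
  refine ⟨⟨v.C, v.copy, insert z v.dom, Finset.insert_nonempty _ _, ?_, fu, ?_, ?_⟩, ?_, ?_⟩
  · -- domSub
    rw [Finset.coe_insert]
    exact Set.insert_subset hzC v.domSub
  · -- frange
    intro x hx
    rcases Finset.mem_insert.mp hx with rfl | hx'
    · rw [hfuz]
      exact ⟨hm1, le_trans hmle v.minf_le_p⟩
    · rw [hfud x hx']
      exact v.frange x hx'
  · -- fkat
    intro x hx y hy
    rcases Finset.mem_insert.mp hx with rfl | hx' <;>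
      rcases Finset.mem_insert.mp hy with h' | hy'
    · rw [h', hfuz, dist_self]
      have h2 : (0 : ℝ) ≤ (m : ℝ) := Nat.cast_nonneg _
      constructor
      · simp
      · linarith
    · rw [hfuz, hfud y hy', hzr y hy']
      exact habs y hy'
    · rw [h'] at *
      rw [hfuz, hfud x hx', dist_comm, hzr x hx']
      obtain ⟨ha, hb⟩ := habs x hx'
      constructor
      · rw [abs_sub_comm]; exact ha
      · linarith
    · rw [hfud x hx', hfud y hy']
      exact v.fkat x hx' y hy'
  · -- le
    refine ⟨?_, subset_refl _, ?_⟩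
    · rw [Finset.coe_insert]
      exact Set.subset_insert _ _
    · exact hfud
  · -- minf
    show (insert z v.dom).inf' _ fu = _
    rw [Finset.inf'_insert (H := v.domNE)]
    have : v.dom.inf' v.domNE fu = v.dom.inf' v.domNE v.f :=
      Finset.inf'_congr _ rfl hfud
    rw [this, hfuz]
    show min m v.minf = _
    rw [min_eq_left hmle]

lemma not_largeN (hp : 1 ≤ p)
    (hdist : ∀ x y : X, x ≠ y → ∃ k : ℕ, 1 ≤ k ∧ k ≤ p ∧ dist x y = k)
    (hultra : ∀ (F : Finset X) (φ : X → X),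
      (∀ x ∈ F, ∀ y ∈ F, dist (φ x) (φ y) = dist x y) →
      ∃ ψ : X ≃ᵢ X, ∀ x ∈ F, ψ x = φ x)
    (huniv : ∀ (Y : Type) [MetricSpace Y] [Countable Y],
      (∀ x y : Y, x ≠ y → ∃ k : ℕ, 1 ≤ k ∧ k ≤ p ∧ dist x y = k) →
      ∃ e : Y → X, Isometry e)
    (Γ : Set X) :
    ∀ (n : ℕ) (s : UPair X p), ¬ LargeN Γ n s → ∃ t, t.leK 0 s ∧ LargeN Γᶜ n t := by
  intro n
  induction n with
  | zero =>
    intro s hs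
    simp only [LargeN] at hs ⊢
    push_neg at hs
    obtain ⟨t, hts, hfin⟩ := hs
    refine ⟨t, hts, ?_⟩
    intro u hut
    have h1 : u.orbit.Infinite := orbit_infinite hp hdist hultra huniv u
    have h2 : (u.orbit ∩ Γ).Finite :=
      hfin.subset (Set.inter_subset_inter_left Γ (UPair.orbit_mono hut.1))
    have h3 := h1.diff h2
    apply h3.mono
    rintro x ⟨hx1, hx2⟩
    exact ⟨hx1, fun hxΓ => hx2 ⟨hx1, hxΓ⟩⟩
  | succ n ih =>
    intro s hs
    simp only [LargeN] at hs ⊢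
    push_neg at hs
    obtain ⟨t, hts, ht⟩ := hs
    refine ⟨t, hts, ?_⟩
    intro v hvt
    obtain ⟨u0, hu0⟩ := exists_leK1 hp hdist hultra huniv v
    have hu0t : u0.leK 1 t :=
      ⟨UPair.le_trans hu0.1 hvt.1, by rw [hu0.2, UPair.leK0_minf hvt]⟩
    have hnl : ¬ LargeN Γ n u0 := ht u0 hu0t
    obtain ⟨u', hu'0, hu'⟩ := ih u0 hnl
    refine ⟨u', ⟨UPair.le_trans hu'0.1 hu0.1, ?_⟩, hu'⟩
    rw [UPair.leK0_minf hu'0, hu0.2]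

end Main

/-- If `Γ ⊆ U_p` is not large relative to `s ∈ P`, then there is `t ≤₀ s` such that
the complement of `Γ` is large relative to `t`. -/
theorem not_large_implies_complement_large
    (p : ℕ) (hp : 1 ≤ p) (X : Type) [MetricSpace X] [Countable X]
    (hdist : ∀ x y : X, x ≠ y → ∃ k : ℕ, 1 ≤ k ∧ k ≤ p ∧ dist x y = k)
    (hultra : ∀ (F : Finset X) (φ : X → X),
      (∀ x ∈ F, ∀ y ∈ F, dist (φ x) (φ y) = dist x y) →
      ∃ ψ : X ≃ᵢ X, ∀ x ∈ F, ψ x = φ x)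
    (huniv : ∀ (Y : Type) [MetricSpace Y] [Countable Y],
      (∀ x y : Y, x ≠ y → ∃ k : ℕ, 1 ≤ k ∧ k ≤ p ∧ dist x y = k) →
      ∃ e : Y → X, Isometry e)
    (Γ : Set X) (s : UPair X p) (h : ¬ Large Γ s) :
    ∃ t : UPair X p, UPair.leK 0 t s ∧ Large Γᶜ t := by
  have h' : ¬ LargeN Γ (s.minf - 1) s := h
  obtain ⟨t, hts, hl⟩ := not_largeN hp hdist hultra huniv Γ (s.minf - 1) s h'
  refine ⟨t, hts, ?_⟩
  show LargeN Γᶜ (t.minf - 1) t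
  rw [UPair.leK0_minf hts]
  exact hl
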